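/- Every real symmetric 2×2×2 tensor has symmetric rank at most 3, i.e., can be written as a sum of at most 3 terms of the form u⊗u⊗u with u ∈ ℝ². -/

import Mathlib

lemma cube_root_exists (t : ℝ) : ∃ y : ℝ, y ^ 3 = t := by
  rcases le_total 0 t with h | h
  · refine ⟨t ^ ((1:ℝ)/3), ?_⟩
    rw [← Real.rpow_natCast (t ^ ((1:ℝ)/3)) 3, ← Real.rpow_mul h]
    norm_num
  · have h' : 0 ≤ -t := by linarith
    refine ⟨-((-t) ^ ((1:ℝ)/3)), ?_⟩
    have : ((-t) ^ ((1:ℝ)/3)) ^ (3:ℕ) = -t := by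
      rw [← Real.rpow_natCast ((-t) ^ ((1:ℝ)/3)) 3, ← Real.rpow_mul h']
      norm_num
    nlinarith [this]

def Sol (a b c d p1 p2 q1 q2 r1 r2 : ℝ) : Prop :=
  p1^3 + q1^3 + r1^3 = a ∧
  p1^2*p2 + q1^2*q2 + r1^2*r2 = b ∧
  p1*p2^2 + q1*q2^2 + r1*r2^2 = c ∧
  p2^3 + q2^3 + r2^3 = d

lemma core_r (a b c d r : ℝ) (hE : b - a*r ≠ 0) (hD : a*r^2 - 2*b*r + c ≠ 0) :
    ∃ p1 p2 q1 q2 r1 r2 : ℝ, Sol a b c d p1 p2 q1 q2 r1 r2 := by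
  set E := b - a*r with hEdef
  set D := a*r^2 - 2*b*r + c with hDdef
  set s : ℝ := r + D/E with hs
  set C : ℝ := E^2/D with hC
  set A : ℝ := a - C with hA
  obtain ⟨α, hα⟩ := cube_root_exists A
  obtain ⟨γ, hγ⟩ := cube_root_exists C
  obtain ⟨t, ht⟩ := cube_root_exists (d - A*r^3 - C*s^3)
  refine ⟨α, α*r, γ, γ*s, 0, t, ?_, ?_, ?_, ?_⟩
  · rw [hα, hγ]; rw [hA]; ring
  · have h1 : α^2*(α*r) = A*r := by rw [show α^2*(α*r) = α^3*r by ring, hα]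
    have h2 : γ^2*(γ*s) = C*s := by rw [show γ^2*(γ*s) = γ^3*s by ring, hγ]
    rw [h1, h2]
    have : A*r + C*s = b := by
      rw [hA, hs, hC]
      field_simp
      ring
    linarith [this]
  · have h1 : α*(α*r)^2 = A*r^2 := by rw [show α*(α*r)^2 = α^3*r^2 by ring, hα]
    have h2 : γ*(γ*s)^2 = C*s^2 := by rw [show γ*(γ*s)^2 = γ^3*s^2 by ring, hγ]
    rw [h1, h2]
    have : A*r^2 + C*s^2 = c := by
      rw [hA, hs, hC]
      field_simp
      ring
    linarith [this]
  · have h1 : (α*r)^3 = A*r^3 := by rw [mul_pow, hα]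
    have h2 : (γ*s)^3 = C*s^3 := by rw [mul_pow, hγ]
    rw [h1, h2, ht]; ring

lemma core (a b c d : ℝ) (h : a ≠ 0 ∨ b ≠ 0) :
    ∃ p1 p2 q1 q2 r1 r2 : ℝ, Sol a b c d p1 p2 q1 q2 r1 r2 := by
  rcases eq_or_ne a 0 with ha | ha
  · subst ha
    have hb : b ≠ 0 := h.resolve_left (by simp)
    refine core_r 0 b c d (c/(2*b) + 1) (by simpa using hb) ?_
    have : (0:ℝ)*(c/(2*b)+1)^2 - 2*b*(c/(2*b)+1) + c = -2*b := by
      field_simp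
      ring
    rw [this]
    simpa using hb
  · -- a ≠ 0 : try r = b/a + 1 and b/a + 2
    by_cases hD1 : a*(b/a+1)^2 - 2*b*(b/a+1) + c ≠ 0
    · refine core_r a b c d (b/a+1) ?_ hD1
      have : b - a*(b/a+1) = -a := by field_simp; ring
      rw [this]; simpa using ha
    · by_cases hD2 : a*(b/a+2)^2 - 2*b*(b/a+2) + c ≠ 0
      · refine core_r a b c d (b/a+2) ?_ hD2
        have : b - a*(b/a+2) = -2*a := by field_simp; ring
        rw [this]
        simp [ha]
      · exfalso
        push_neg at hD1 hD2
        apply ha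
        have e1 : a*(b/a+1)^2 - 2*b*(b/a+1) + c = a + (c - b^2/a) := by
          field_simp; ring
        have e2 : a*(b/a+2)^2 - 2*b*(b/a+2) + c = 4*a + (c - b^2/a) := by
          field_simp; ring
        rw [e1] at hD1; rw [e2] at hD2
        linarith

lemma decomp (a b c d : ℝ) :
    ∃ p1 p2 q1 q2 r1 r2 : ℝ, Sol a b c d p1 p2 q1 q2 r1 r2 := by
  by_cases h1 : a ≠ 0 ∨ b ≠ 0
  · exact core a b c d h1
  · push_neg at h1
    obtain ⟨ha, hb⟩ := h1
    by_cases h2 : d ≠ 0 ∨ c ≠ 0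
    · obtain ⟨p1, p2, q1, q2, r1, r2, hs⟩ := core d c b a h2
      obtain ⟨s1, s2, s3, s4⟩ := hs
      exact ⟨p2, p1, q2, q1, r2, r1, s4, by linarith [s3], by linarith [s2], s1⟩
    · push_neg at h2
      obtain ⟨hd, hc⟩ := h2
      subst ha; subst hb; subst hc; subst hd
      exact ⟨0, 0, 0, 0, 0, 0, by norm_num, by norm_num, by norm_num, by norm_num⟩

theorem symmetric_rank_at_most_three
    (X : Fin 2 → Fin 2 → Fin 2 → ℝ)
    (hsym : ∀ i j k, X i j k = X j i k ∧ X i j k = X i k j) :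
    ∃ u v w : Fin 2 → ℝ, ∀ i j k,
      X i j k = u i * u j * u k + v i * v j * v k + w i * w j * w k := by
  obtain ⟨p1, p2, q1, q2, r1, r2, h1, h2, h3, h4⟩ :=
    decomp (X 0 0 0) (X 0 0 1) (X 0 1 1) (X 1 1 1)
  refine ⟨![p1, p2], ![q1, q2], ![r1, r2], ?_⟩
  have e010 : X 0 1 0 = X 0 0 1 := ((hsym 0 0 1).2).symm
  have e100 : X 1 0 0 = X 0 0 1 := by
    rw [(hsym 1 0 0).1, e010]
  have e101 : X 1 0 1 = X 0 1 1 := (hsym 1 0 1).1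
  have e110 : X 1 1 0 = X 0 1 1 := by
    rw [(hsym 1 1 0).2, e101]
  intro i j k
  fin_cases i <;> fin_cases j <;> fin_cases k <;>
    simp only [Fin.zero_eta, Fin.mk_one, Matrix.cons_val_zero, Matrix.cons_val_one,
      Matrix.head_cons]
  · linear_combination -h1
  · linear_combination -h2
  · linear_combination e010 - h2
  · linear_combination -h3
  · linear_combination e100 - h2
  · linear_combination e101 - h3
  · linear_combination e110 - h3
  · linear_combination -h4
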